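/- For k > 0 satisfying tan(kL/2) = α(k) with α(k) = c/(2k) − kν²/2, the norm of ψ^{[k]}(x) = cos(kx) + α(k) sin(k|x|) with respect to the inner product [φ|ψ] = ∫_{-L/2}^{L/2} φψ dx + ν²φ(0)ψ(0) equals Z_k² = (L/2)(1 + α(k)²) + α(k)/k + ν². -/

import Mathlib

open MeasureTheory Filter Set Topology

theorem stmt11 (c ν L : ℝ) (hL : 0 < L)
    (k : ℝ) (hk : 0 < k) (α : ℝ) (hα : α = c/(2*k) - k*ν^2/2)
    (hquant : Real.tan (k*L/2) = α)
    (ψ : ℝ → ℝ) (hψ : ∀ x, ψ x = Real.cos (k*x) + α * Real.sin (k*|x|)) :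
    (∫ x in (-L/2)..(L/2), ψ x * ψ x) + ν^2 * ψ 0 * ψ 0
      = (L/2) * (1 + α^2) + α/k + ν^2 := by
  have hk0 : k ≠ 0 := ne_of_gt hk
  have hψ0 : ψ 0 = 1 := by simp [hψ]
  set a := L/2 with ha
  have ha0 : 0 ≤ a := by positivity
  -- the even integrand as a function of |x|
  set f : ℝ → ℝ := fun x => (Real.cos (k*x) + α * Real.sin (k*x))^2 with hf
  have hfe : ∀ x, ψ x * ψ x = f |x| := by
    intro x
    have : Real.cos (k*|x|) = Real.cos (k*x) := by
      rcases abs_choice x with h | h <;> simp [h, mul_neg]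
    simp [hψ, hf, this, sq]
  -- continuity and integrability
  have hfc : Continuous f := by fun_prop
  have hint : ∀ u v : ℝ, IntervalIntegrable (fun x => f |x|) volume u v :=
    fun u v => (hfc.comp continuous_abs).intervalIntegrable u v
  -- key trig identity from the quantization condition
  have key : (1-α^2) * Real.sin (k*L) + 2*α*(1 - Real.cos (k*L)) = 2*α := by
    have h2 : k*L = 2*(k*L/2) := by ring
    rw [h2, Real.sin_two_mul, Real.cos_two_mul]
    set θ := k*L/2 with hθ
    by_cases hc : Real.cos θ = 0
    · have hα0 : α = 0 := by
        rw [← hquant, Real.tan_eq_sin_div_cos, hc, div_zero]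
      rw [hα0, hc]; ring
    · have hs : Real.sin θ = α * Real.cos θ := by
        have h := hquant
        rw [Real.tan_eq_sin_div_cos] at h
        field_simp at h
        linarith
      have hpyth := Real.sin_sq_add_cos_sq θ
      rw [hs] at hpyth ⊢
      linear_combination (-2*α) * hpyth
  -- antiderivative on [0, a]
  set F : ℝ → ℝ := fun x => ((1+α^2)/2)*x + ((1-α^2)/(4*k))*Real.sin (2*k*x)
      - (α/(2*k))*Real.cos (2*k*x) with hF
  have hderiv : ∀ x ∈ uIcc (0:ℝ) a, HasDerivAt F (f x) x := by
    intro x _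
    have h1 : HasDerivAt (fun x : ℝ => 2*k*x) (2*k) x := by
      simpa using (hasDerivAt_id x).const_mul (2*k)
    have hsin : HasDerivAt (fun x : ℝ => Real.sin (2*k*x)) (Real.cos (2*k*x) * (2*k)) x :=
      (Real.hasDerivAt_sin (2*k*x)).comp x h1
    have hcos : HasDerivAt (fun x : ℝ => Real.cos (2*k*x)) (-Real.sin (2*k*x) * (2*k)) x :=
      (Real.hasDerivAt_cos (2*k*x)).comp x h1
    have hid : HasDerivAt (fun x : ℝ => ((1+α^2)/2)*x) ((1+α^2)/2) x := by
      simpa using (hasDerivAt_id x).const_mul ((1+α^2)/2)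
    have := (hid.add (hsin.const_mul ((1-α^2)/(4*k)))).sub (hcos.const_mul (α/(2*k)))
    refine this.congr_deriv (Eq.symm ?_)
    have hD : (1+α^2)/2 + (1-α^2)/(4*k)*(Real.cos (2*k*x)*(2*k))
        - α/(2*k)*(-Real.sin (2*k*x)*(2*k))
        = (1+α^2)/2 + (1-α^2)/2 * Real.cos (2*(k*x)) + α * Real.sin (2*(k*x)) := by
      rw [show 2*k*x = 2*(k*x) from by ring]
      field_simp
      ring
    rw [hD, Real.cos_two_mul, Real.sin_two_mul, hf]
    simp only
    linear_combination (α^2) * (Real.sin_sq_add_cos_sq (k*x))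
  have hI : (∫ x in (0:ℝ)..a, f x) = F a - F 0 :=
    intervalIntegral.integral_eq_sub_of_hasDerivAt hderiv
      (hfc.intervalIntegrable 0 a)
  -- split the integral and use evenness
  have hsplit : (∫ x in (-a)..a, f |x|)
      = (∫ x in (-a)..(0:ℝ), f |x|) + ∫ x in (0:ℝ)..a, f |x| :=
    (intervalIntegral.integral_add_adjacent_intervals (hint _ _) (hint _ _)).symm
  have hneg : (∫ x in (-a)..(0:ℝ), f |x|) = ∫ x in (0:ℝ)..a, f x := by
    have h1 : (∫ x in (-a)..(0:ℝ), f |x|) = ∫ x in (-a)..(0:ℝ), f (-x) := by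
      apply intervalIntegral.integral_congr
      intro x hx
      rw [Set.uIcc_of_le (by linarith : -a ≤ (0:ℝ))] at hx
      show f |x| = f (-x)
      rw [abs_of_nonpos hx.2]
    rw [h1]
    simpa using intervalIntegral.integral_comp_neg (a := -a) (b := 0) f
  have hpos : (∫ x in (0:ℝ)..a, f |x|) = ∫ x in (0:ℝ)..a, f x := by
    apply intervalIntegral.integral_congr
    intro x hx
    rw [Set.uIcc_of_le ha0] at hx
    show f |x| = f x
    rw [abs_of_nonneg hx.1]
  have hmain : (∫ x in (-a)..a, ψ x * ψ x) = 2 * (F a - F 0) := by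
    rw [show (∫ x in (-a)..a, ψ x * ψ x) = ∫ x in (-a)..a, f |x| from
      intervalIntegral.integral_congr (fun x _ => hfe x)]
    rw [hsplit, hneg, hpos, hI]; ring
  rw [show -L/2 = -a from by rw [ha]; ring, hmain, hψ0]
  have h2ka : 2*k*a = k*L := by rw [ha]; ring
  simp only [hF, h2ka, mul_zero, Real.sin_zero, Real.cos_zero]
  linear_combination (1/(2*k)) * key
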